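/- For the standard randomized Kaczmarz iteration x_{k+1} = x_k + ((b_{i_k} - ⟨a_{i_k},x_k⟩)/||a_{i_k}||²)a_{i_k} on a consistent system Ax = b with rows sampled with probability ||a_i||²/||A||_F², one has E⟨x_k - x, v_l⟩ = (1 - σ_l²/||A||_F²)^k ⟨x_0 - x, v_l⟩ for every right singular vector v_l and all k ≥ 0. -/

import Mathlib

open Matrix Finset

/-- expected signed error of the standard randomized Kaczmarz
iteration along a right singular vector (Steinerberger's theorem). -/
theorem kaczmarz_expected_error {m n : ℕ} (A : Matrix (Fin m) (Fin n) ℝ)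
    (hrow : ∀ i, A i ⬝ᵥ A i ≠ 0)
    (F : ℝ) (hF : F = ∑ i, A i ⬝ᵥ A i)
    (xs x0 : Fin n → ℝ) (b : Fin m → ℝ) (hb : ∀ i, b i = A i ⬝ᵥ xs)
    (v : Fin n → ℝ) (σsq : ℝ) (hv : (Aᵀ * A).mulVec v = σsq • v)
    (x : (ℕ → Fin m) → ℕ → (Fin n → ℝ))
    (hx0 : ∀ ω, x ω 0 = x0)
    (hx : ∀ ω k, x ω (k+1) = x ω k
      + ((b (ω k) - A (ω k) ⬝ᵥ x ω k) / (A (ω k) ⬝ᵥ A (ω k))) • A (ω k))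
    (d : Fin m) (k : ℕ) :
    ∑ σ : Fin k → Fin m,
        (∏ t, (A (σ t) ⬝ᵥ A (σ t)) / F) *
          ((x (fun t => if h : t < k then σ ⟨t, h⟩ else d) k - xs) ⬝ᵥ v)
      = (1 - σsq/F)^k * ((x0 - xs) ⬝ᵥ v) := by
  -- positivity of row norms and of F
  have hwpos : ∀ i, 0 < A i ⬝ᵥ A i := by
    intro i
    have h1 : 0 ≤ A i ⬝ᵥ A i := by
      exact Finset.sum_nonneg fun j _ => mul_self_nonneg _
    exact lt_of_le_of_ne h1 (Ne.symm (hrow i))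
  have hFpos : 0 < F := by
    rw [hF]
    exact Finset.sum_pos (fun i _ => hwpos i) ⟨d, Finset.mem_univ d⟩
  have hF0 : F ≠ 0 := ne_of_gt hFpos
  -- x ω k only depends on ω 0, ..., ω (k-1)
  have agree : ∀ k (ω ω' : ℕ → Fin m), (∀ t, t < k → ω t = ω' t) → x ω k = x ω' k := by
    intro k
    induction k with
    | zero => intro ω ω' _; rw [hx0, hx0]
    | succ k ih =>
      intro ω ω' h
      rw [hx, hx, ih ω ω' (fun t ht => h t (ht.trans (Nat.lt_succ_self k))),
        h k (Nat.lt_succ_self k)]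
  -- one step of the error recursion
  have hstep : ∀ (ω : ℕ → Fin m) (k : ℕ),
      (x ω (k+1) - xs) ⬝ᵥ v = (x ω k - xs) ⬝ᵥ v
        - (A (ω k) ⬝ᵥ (x ω k - xs)) * (A (ω k) ⬝ᵥ v) / (A (ω k) ⬝ᵥ A (ω k)) := by
    intro ω k
    have hw := hrow (ω k)
    rw [hx, hb]
    have h1 : x ω k + ((A (ω k) ⬝ᵥ xs - A (ω k) ⬝ᵥ x ω k) / (A (ω k) ⬝ᵥ A (ω k))) • A (ω k) - xs
        = (x ω k - xs) + ((A (ω k) ⬝ᵥ xs - A (ω k) ⬝ᵥ x ω k) / (A (ω k) ⬝ᵥ A (ω k))) • A (ω k) := by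
      ring_nf
    rw [h1, add_dotProduct, smul_dotProduct, smul_eq_mul, dotProduct_sub]
    field_simp
    ring
  -- spectral identity
  have hspec : ∀ e : Fin n → ℝ, ∑ j, (A j ⬝ᵥ e) * (A j ⬝ᵥ v) = σsq * (e ⬝ᵥ v) := by
    intro e
    have h1 : e ⬝ᵥ (Aᵀ * A).mulVec v = σsq * (e ⬝ᵥ v) := by
      rw [hv, dotProduct_smul, smul_eq_mul]
    rw [← h1, ← mulVec_mulVec, dotProduct_mulVec, vecMul_transpose]
    simp only [dotProduct, mulVec]
  induction k with
  | zero =>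
    simp [hx0]
  | succ k ih =>
    -- split the sum over Fin (k+1) → Fin m using snoc
    rw [← Equiv.sum_comp (Fin.snocEquiv (fun _ => Fin m)), Fintype.sum_prod_type]
    have key : ∀ (j : Fin m) (σ' : Fin k → Fin m),
        (∏ t, (A ((Fin.snocEquiv (fun _ => Fin m)) (j, σ') t) ⬝ᵥ
            A ((Fin.snocEquiv (fun _ => Fin m)) (j, σ') t)) / F) *
          ((x (fun t => if h : t < k + 1 then (Fin.snocEquiv (fun _ => Fin m)) (j, σ') ⟨t, h⟩ else d) (k+1) - xs) ⬝ᵥ v)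
        = ((∏ t, (A (σ' t) ⬝ᵥ A (σ' t)) / F) * ((A j ⬝ᵥ A j) / F)) *
          (((x (fun t => if h : t < k then σ' ⟨t, h⟩ else d) k - xs) ⬝ᵥ v)
            - (A j ⬝ᵥ (x (fun t => if h : t < k then σ' ⟨t, h⟩ else d) k - xs)) * (A j ⬝ᵥ v) / (A j ⬝ᵥ A j)) := by
      intro j σ'
      have hωk : (if h : k < k + 1 then (Fin.snocEquiv (fun _ => Fin m)) (j, σ') ⟨k, h⟩ else d) = j := by
        rw [dif_pos (Nat.lt_succ_self k)]
        show (Fin.snoc σ' j : Fin (k+1) → Fin m) (Fin.last k) = j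
        simp
      have hxk : x (fun t => if h : t < k + 1 then (Fin.snocEquiv (fun _ => Fin m)) (j, σ') ⟨t, h⟩ else d) k
          = x (fun t => if h : t < k then σ' ⟨t, h⟩ else d) k := by
        apply agree
        intro t ht
        rw [dif_pos (ht.trans (Nat.lt_succ_self k)), dif_pos ht]
        simp only [Fin.snocEquiv_apply]
        have : (⟨t, ht.trans (Nat.lt_succ_self k)⟩ : Fin (k+1)) = Fin.castSucc ⟨t, ht⟩ := rfl
        rw [this, Fin.snoc_castSucc]
      rw [hstep, hωk, hxk]
      congr 1
      · simp only [Fin.snocEquiv_apply, Fin.prod_univ_castSucc, Fin.snoc_castSucc, Fin.snoc_last]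
    simp only [key]
    -- now sum over j
    have inner : ∀ σ' : Fin k → Fin m,
        ∑ j, ((∏ t, (A (σ' t) ⬝ᵥ A (σ' t)) / F) * ((A j ⬝ᵥ A j) / F)) *
          (((x (fun t => if h : t < k then σ' ⟨t, h⟩ else d) k - xs) ⬝ᵥ v)
            - (A j ⬝ᵥ (x (fun t => if h : t < k then σ' ⟨t, h⟩ else d) k - xs)) * (A j ⬝ᵥ v) / (A j ⬝ᵥ A j))
        = (1 - σsq/F) * ((∏ t, (A (σ' t) ⬝ᵥ A (σ' t)) / F) *
            ((x (fun t => if h : t < k then σ' ⟨t, h⟩ else d) k - xs) ⬝ᵥ v)) := by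
      intro σ'
      set P := ∏ t, (A (σ' t) ⬝ᵥ A (σ' t)) / F with hP
      set e := x (fun t => if h : t < k then σ' ⟨t, h⟩ else d) k - xs with he
      have hterm : ∀ j : Fin m, (P * ((A j ⬝ᵥ A j) / F)) *
          ((e ⬝ᵥ v) - (A j ⬝ᵥ e) * (A j ⬝ᵥ v) / (A j ⬝ᵥ A j))
          = P * (((A j ⬝ᵥ A j) * (e ⬝ᵥ v)) / F) - P * ((A j ⬝ᵥ e) * (A j ⬝ᵥ v) / F) := by
        intro j
        have hw := hrow j
        field_simp
      rw [Finset.sum_congr rfl (fun j _ => hterm j), Finset.sum_sub_distrib,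
        ← Finset.mul_sum, ← Finset.mul_sum, ← Finset.sum_div, ← Finset.sum_div,
        ← Finset.sum_mul, ← hF, hspec]
      field_simp
    rw [Finset.sum_comm, Finset.sum_congr rfl (fun σ' _ => inner σ'), ← Finset.mul_sum, ih,
      pow_succ]
    ring
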